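/- Let G be a finite nested group with chain of centers G = X_0 > X_1 > ⋯ > X_n ≥ 1. If [X_{i-1},G] ≰ X_i for some integer i with 1 ≤ i ≤ n, then [X_{i-1},G] = [[X_{i-1},G],G]. -/

import Mathlib

open CategoryTheory

open scoped commutatorElement

noncomputable section

/-- The kernel of the character of `V`: `{g | χ(g) = χ(1)}`. -/
def charKernel {G : Type} [Group G] (V : FDRep ℂ G) : Set G :=
  {g | V.character g = V.character 1}

/-- The center of the character of `V`: `{g | |χ(g)| = χ(1)}`. -/
def charCenter {G : Type} [Group G] (V : FDRep ℂ G) : Set G :=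
  {g | ((‖V.character g‖ : ℝ) : ℂ) = V.character 1}

/-- The degree `χ(1)` of the character of `V`. -/
def charDegree {G : Type} [Group G] (V : FDRep ℂ G) : ℕ :=
  Module.finrank ℂ V

/-- A group is nested if the centers of its irreducible characters form a chain. -/
def Nested (G : Type) [Group G] : Prop :=
  ∀ V W : FDRep ℂ G, Simple V → Simple W →
    charCenter V ⊆ charCenter W ∨ charCenter W ⊆ charCenter V

/-- `G = X 0 > X 1 > ⋯ > X n ≥ 1` is the chain of centers for `G`: the `X i` are the
distinct subgroups arising as centers of irreducible characters of `G`. -/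
def IsChainOfCenters {G : Type} [Group G] (n : ℕ) (X : ℕ → Subgroup G) : Prop :=
  X 0 = ⊤ ∧ (∀ i ≤ n, (X i).Normal) ∧ (∀ i < n, X (i + 1) < X i) ∧
    (∀ i ≤ n, ∃ V : FDRep ℂ G, Simple V ∧ charCenter V = (X i : Set G)) ∧
    (∀ V : FDRep ℂ G, Simple V → ∃ i ≤ n, charCenter V = (X i : Set G))

/-- `N` is a minimal normal subgroup of `H`. -/
def IsMinimalNormal {H : Type*} [Group H] (N : Subgroup H) : Prop :=
  N.Normal ∧ N ≠ ⊥ ∧ ∀ K : Subgroup H, K.Normal → K ≠ ⊥ → K ≤ N → K = N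

/-- An elementary abelian `p`-group: abelian with every element of order dividing `p`. -/
def IsElementaryAbelian (p : ℕ) (H : Type*) [Group H] : Prop :=
  (∀ a b : H, a * b = b * a) ∧ ∀ a : H, a ^ p = 1

section AuxProofs

section LinearAlgebraAux

open Polynomial Matrix

/-- Roots of the charpoly of a matrix with `M ^ m = 1` are `m`-th roots of unity. -/
lemma root_pow_eq_one {d : Type} [Fintype d] [DecidableEq d]
    (M : Matrix d d ℂ) (m : ℕ) (hM : M ^ m = 1) (μ : ℂ)
    (hμ : μ ∈ M.charpoly.roots) : μ ^ m = 1 := by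
  have hroot : M.charpoly.eval μ = 0 := (Polynomial.isRoot_of_mem_roots hμ)
  rw [Matrix.charpoly, eval_det] at hroot
  rw [matPolyEquiv_charmatrix] at hroot
  have h2 : Polynomial.eval (Matrix.scalar d μ) (X - C M) = μ • (1 : Matrix d d ℂ) - M := by
    simp [Matrix.scalar, smul_one_eq_diagonal]
  rw [h2] at hroot
  obtain ⟨v, hv, hMv⟩ := (Matrix.exists_mulVec_eq_zero_iff).2 hroot
  have hv' : M *ᵥ v = μ • v := by
    have h3 : (μ • (1 : Matrix d d ℂ)) *ᵥ v = M *ᵥ v := by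
      have h4 : (μ • (1 : Matrix d d ℂ)) *ᵥ v - M *ᵥ v = 0 := by
        rw [← Matrix.sub_mulVec]; exact hMv
      linear_combination (norm := module) h4
    calc M *ᵥ v = (μ • (1 : Matrix d d ℂ)) *ᵥ v := h3.symm
      _ = μ • v := by rw [Matrix.smul_mulVec, Matrix.one_mulVec]
  have key : ∀ j : ℕ, (M ^ j) *ᵥ v = μ ^ j • v := by
    intro j
    induction j with
    | zero => simp
    | succ j ih =>
        rw [pow_succ', pow_succ', ← Matrix.mulVec_mulVec, ih, Matrix.mulVec_smul, hv',
          smul_smul, mul_comm]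
  have := key m
  rw [hM, Matrix.one_mulVec] at this
  have : (μ ^ m - 1) • v = 0 := by rw [sub_smul, one_smul, ← this, sub_self]
  rcases smul_eq_zero.mp this with h | h
  · exact sub_eq_zero.mp h
  · exact absurd h hv


lemma multiset_re_sum (t : Multiset ℂ) : (t.map Complex.re).sum = t.sum.re := by
  induction t using Multiset.induction_on with
  | empty => simp
  | cons a s ih => simp [ih]

lemma multiset_all_eq_one (t : Multiset ℝ) (h : ∀ x ∈ t, x ≤ 1)
    (hsum : (t.card : ℝ) ≤ t.sum) : ∀ x ∈ t, x = 1 := by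
  intro a ha
  by_contra hne
  have ha1 : a < 1 := lt_of_le_of_ne (h a ha) hne
  obtain ⟨t', rfl⟩ := Multiset.exists_cons_of_mem ha
  have h' : t'.sum ≤ t'.card • (1 : ℝ) :=
    Multiset.sum_le_card_nsmul t' 1 (fun x hx => h x (Multiset.mem_cons_of_mem hx))
  rw [Multiset.sum_cons] at hsum
  rw [Multiset.card_cons] at hsum
  simp only [nsmul_eq_mul, mul_one] at h'
  push_cast at hsum
  linarith

lemma multiset_const_of_abs_sum (s : Multiset ℂ)
    (h1 : ∀ z ∈ s, ‖z‖ ≤ 1)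
    (h2 : ‖s.sum‖ = s.card) : ∃ c : ℂ, ∀ z ∈ s, z = c := by
  rcases eq_or_ne s 0 with rfl | hs
  · exact ⟨1, by simp⟩
  have hcard : (0 : ℝ) < s.card := by exact_mod_cast Multiset.card_pos.mpr hs
  have hS : s.sum ≠ 0 := by
    intro h; rw [h] at h2; simp at h2; linarith [h2 ▸ hcard]
  set S := s.sum with hSdef
  have habsS : (‖S‖ : ℝ) ≠ 0 := norm_ne_zero_iff.mpr hS
  set u : ℂ := (starRingEnd ℂ) S / ((‖S‖ : ℝ) : ℂ) with hu
  have huS : u * S = ((‖S‖ : ℝ) : ℂ) := by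
    rw [hu, div_mul_eq_mul_div, Complex.conj_mul', sq]
    push_cast
    rw [mul_div_assoc, div_self (Complex.ofReal_ne_zero.mpr habsS), mul_one]
  have habsu : ‖u‖ = 1 := by
    rw [hu, norm_div, Complex.norm_conj, Complex.norm_real,
      norm_norm, div_self habsS]
  -- the real parts of `u * z` sum to the cardinality
  have hsum : ((s.map fun z => (u * z).re).sum : ℝ) = s.card := by
    have : (s.map fun z => (u * z).re) = ((s.map fun z => u * z).map Complex.re) := by
      rw [Multiset.map_map]; rfl
    rw [this, multiset_re_sum]
    have : (s.map fun z => u * z).sum = u * S := by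
      simpa using Multiset.sum_map_mul_left (s := s) (a := u) (f := fun z => z)
    rw [this, huS, Complex.ofReal_re, h2]
  have hbound : ∀ z ∈ s, (u * z).re ≤ 1 := by
    intro z hz
    calc (u * z).re ≤ ‖u * z‖ := Complex.re_le_norm _
      _ = ‖u‖ * ‖z‖ := norm_mul u z
      _ ≤ 1 := by rw [habsu, one_mul]; exact h1 z hz
  have hone : ∀ z ∈ s, (u * z).re = 1 := by
    intro z hz
    have := multiset_all_eq_one (s.map fun z => (u * z).re)
      (by intro x hx; obtain ⟨z', hz', rfl⟩ := Multiset.mem_map.mp hx; exact hbound z' hz')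
      (by rw [hsum]; simp)
    exact this _ (Multiset.mem_map_of_mem _ hz)
  refine ⟨u⁻¹, fun z hz => ?_⟩
  have hre := hone z hz
  have habs : ‖u * z‖ ≤ 1 := by
    rw [norm_mul u z, habsu, one_mul]; exact h1 z hz
  have him : (u * z).im = 0 := by
    have h3 : Complex.normSq (u * z) ≤ 1 := by
      rw [← Complex.sq_norm]; nlinarith [norm_nonneg (u * z)]
    rw [Complex.normSq_apply, hre] at h3
    nlinarith [sq_nonneg (u * z).im]
  have huz : u * z = 1 := Complex.ext (by simp [hre]) (by simp [him])
  exact eq_inv_of_mul_eq_one_right huz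


lemma abs_eq_one_of_pow_eq_one {c : ℂ} {m : ℕ} (hm : m ≠ 0) (h : c ^ m = 1) :
    ‖c‖ = 1 := by
  have h1 : ‖c‖ ^ m = 1 := by
    rw [← norm_pow, h, norm_one]
  rcases lt_trichotomy (‖c‖) 1 with hlt | heq | hgt
  · have := pow_lt_one₀ (norm_nonneg c) hlt hm
    rw [h1] at this; exact absurd this (lt_irrefl 1)
  · exact heq
  · have := one_lt_pow₀ hgt hm
    rw [h1] at this; exact absurd this (lt_irrefl 1)

/-- Key analytic lemma: a finite-order endomorphism whose trace has absolute value equal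
to the dimension is a scalar. -/
lemma exists_smul_eq_of_abs_trace {V : Type} [AddCommGroup V] [Module ℂ V]
    [FiniteDimensional ℂ V] (A : V →ₗ[ℂ] V) (m : ℕ) (hm : m ≠ 0) (hA : A ^ m = 1)
    (htr : ‖LinearMap.trace ℂ V A‖ = (Module.finrank ℂ V : ℝ)) :
    ∃ c : ℂ, A = c • LinearMap.id := by
  rcases Nat.eq_zero_or_pos (Module.finrank ℂ V) with h0 | hpos
  · have : Subsingleton V := Module.finrank_zero_iff.mp h0
    exact ⟨0, by ext x; exact Subsingleton.elim _ _⟩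
  set b := Module.finBasis ℂ V
  set M := LinearMap.toMatrix b b A with hMdef
  have hMpow : M ^ m = 1 := by
    have : LinearMap.toMatrixAlgEquiv b (A ^ m) = 1 := by rw [hA, _root_.map_one]
    rw [map_pow] at this
    simpa [LinearMap.toMatrixAlgEquiv, hMdef] using this
  have hchar : M.charpoly = A.charpoly := LinearMap.charpoly_toMatrix A b
  have hroots_pow : ∀ μ ∈ A.charpoly.roots, μ ^ m = 1 := by
    intro μ hμ
    exact root_pow_eq_one M m hMpow μ (by rwa [hchar])
  have hcharmonic : A.charpoly.Monic := A.charpoly_monic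
  have hcard : A.charpoly.roots.card = Module.finrank ℂ V := by
    rw [(splits_iff_card_roots).mp (IsAlgClosed.splits A.charpoly),
      A.charpoly_natDegree]
  have htr2 : LinearMap.trace ℂ V A = A.charpoly.roots.sum := by
    rw [LinearMap.trace_eq_matrix_trace ℂ b A, ← hchar,
      Matrix.trace_eq_sum_roots_charpoly]
  obtain ⟨c, hc⟩ := multiset_const_of_abs_sum A.charpoly.roots
    (fun z hz => le_of_eq (abs_eq_one_of_pow_eq_one hm (hroots_pow z hz)))
    (by rw [← htr2, hcard]; exact htr)
  -- minpoly analysis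
  have hAint : IsIntegral ℂ A := Algebra.IsIntegral.isIntegral A
  have hmindvd : minpoly ℂ A ∣ X ^ m - 1 := by
    apply minpoly.dvd
    rw [map_sub, aeval_X_pow, aeval_one, hA, sub_self]
  have hsf : Squarefree (X ^ m - 1 : ℂ[X]) :=
    (Polynomial.X_pow_sub_one_separable_iff.mpr
      (by exact_mod_cast (Nat.cast_ne_zero (R := ℂ)).mpr hm)).squarefree
  have hminsf : Squarefree (minpoly ℂ A) := hsf.squarefree_of_dvd hmindvd
  have hminmonic : (minpoly ℂ A).Monic := minpoly.monic hAint
  have hmindvd_char : minpoly ℂ A ∣ A.charpoly := LinearMap.minpoly_dvd_charpoly A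
  have hcharne : A.charpoly ≠ 0 := hcharmonic.ne_zero
  have hminroots : ∀ μ ∈ (minpoly ℂ A).roots, μ = c := by
    intro μ hμ
    have : A.charpoly.IsRoot μ := (isRoot_of_mem_roots hμ).dvd hmindvd_char
    exact hc μ (mem_roots'.mpr ⟨hcharne, this⟩)
  have hminprod : minpoly ℂ A = (X - C c) ^ (minpoly ℂ A).roots.card := by
    have heq := (IsAlgClosed.splits (minpoly ℂ A)).eq_prod_roots_of_monic hminmonic
    have hrep : (minpoly ℂ A).roots = Multiset.replicate (minpoly ℂ A).roots.card c :=
      Multiset.eq_replicate.mpr ⟨rfl, hminroots⟩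
    conv_lhs => rw [heq, hrep]
    rw [Multiset.map_replicate, Multiset.prod_replicate]
  have hk : (minpoly ℂ A).roots.card = 1 := by
    have hkpos : 0 < (minpoly ℂ A).roots.card := by
      have hnt : Nontrivial V := Module.nontrivial_of_finrank_pos hpos
      have hnt2 : Nontrivial (V →ₗ[ℂ] V) := by
        obtain ⟨v, hv⟩ := exists_ne (0 : V)
        exact nontrivial_of_ne LinearMap.id 0 (fun h => hv (by simpa using LinearMap.congr_fun h v))
      have hdeg : 0 < (minpoly ℂ A).natDegree := minpoly.natDegree_pos hAint
      rw [(splits_iff_card_roots).mp (IsAlgClosed.splits (minpoly ℂ A))]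
      exact hdeg
    by_contra hne
    have h2le : 2 ≤ (minpoly ℂ A).roots.card := by omega
    have : (X - C c) * (X - C c) ∣ minpoly ℂ A := by
      rw [hminprod, ← sq]
      exact pow_dvd_pow _ h2le
    exact Polynomial.not_isUnit_X_sub_C c (hminsf _ this)
  have hmin : minpoly ℂ A = X - C c := by rw [hminprod, hk, pow_one]
  have := minpoly.aeval ℂ A
  rw [hmin, map_sub, aeval_X, aeval_C, sub_eq_zero, Module.algebraMap_end_eq_smul_id] at this
  exact ⟨c, this⟩


end LinearAlgebraAux

variable {G : Type} [Group G]

/-- `p` is invariant under the representation. -/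
def IsInvt (V : FDRep ℂ G) (p : Submodule ℂ V) : Prop := ∀ (g : G), ∀ x ∈ p, V.ρ g x ∈ p

theorem hom_comm_apply' {V W : FDRep ℂ G} (f : V ⟶ W) (g : G) (x : V) :
    f.hom (V.ρ g x) = W.ρ g (f.hom x) :=
  congrArg (fun φ : V.V ⟶ W.V => φ.hom.hom x) (f.comm g)

def subRepρ (V : FDRep ℂ G) (p : Submodule ℂ V) (hp : IsInvt V p) : Representation ℂ G p where
  toFun g := (V.ρ g).restrict (fun x hx => hp g x hx)
  map_one' := by ext x; simp [LinearMap.restrict_apply]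
  map_mul' g h := by ext x; simp [LinearMap.restrict_apply]

lemma subRepρ_apply (V : FDRep ℂ G) (p : Submodule ℂ V) (hp : IsInvt V p) (g : G) (x : p) :
    ((subRepρ V p hp g x : p) : V) = V.ρ g (x : V) := rfl

def subRep (V : FDRep ℂ G) (p : Submodule ℂ V) (hp : IsInvt V p) : FDRep ℂ G :=
  FDRep.of (subRepρ V p hp)

def subRepι (V : FDRep ℂ G) (p : Submodule ℂ V) (hp : IsInvt V p) :
    subRep V p hp ⟶ V where
  hom := ConcreteCategory.ofHom p.subtype
  comm g := by ext x; rfl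

theorem subRepι_mono (V : FDRep ℂ G) (p : Submodule ℂ V) (hp : IsInvt V p) :
    Mono (subRepι V p hp) := by
  constructor
  intro Z a b w
  apply Action.Hom.ext
  apply FGModuleCat.hom_ext
  apply LinearMap.ext
  intro x
  have := LinearMap.ext_iff.1 (congrArg (fun φ => φ.hom.hom.hom) w) x
  simp only [Action.comp_hom] at this
  exact Subtype.ext (by exact this)

theorem nontrivial_of_simple (V : FDRep ℂ G) [Simple V] : Nontrivial V := by
  by_contra h
  rw [not_nontrivial_iff_subsingleton] at h
  have : 𝟙 V = 0 := by
    apply Action.Hom.ext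
    apply FGModuleCat.hom_ext
    apply LinearMap.ext
    intro x
    exact h.elim _ _
  exact (CategoryTheory.id_nonzero V) this

theorem invt_eq_bot_or_top (V : FDRep ℂ G) [Simple V] (p : Submodule ℂ V)
    (hp : IsInvt V p) : p = ⊥ ∨ p = ⊤ := by
  by_cases hbot : p = ⊥
  · exact Or.inl hbot
  right
  have : Mono (subRepι V p hp) := subRepι_mono V p hp
  have hne : subRepι V p hp ≠ 0 := by
    intro h0
    obtain ⟨x, hx, hx0⟩ := (Submodule.ne_bot_iff p).mp hbot
    have := LinearMap.ext_iff.1 (congrArg (fun φ => φ.hom.hom.hom) h0) ⟨x, hx⟩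
    simp only [Action.zero_hom] at this
    exact hx0 this
  have hiso : IsIso (subRepι V p hp) := (Simple.mono_isIso_iff_nonzero _).mpr hne
  -- surjectivity of the inclusion
  have hsurj : Function.Surjective (p.subtype) := by
    have hiso2 : IsIso ((Action.forget _ _).map (subRepι V p hp)) := inferInstance
    intro y
    refine ⟨(inv ((Action.forget _ _).map (subRepι V p hp))) y, ?_⟩
    have := LinearMap.ext_iff.1 (congrArg (fun φ => φ.hom.hom) (IsIso.inv_hom_id ((Action.forget _ _).map (subRepι V p hp)))) y
    exact this
  rw [Submodule.eq_top_iff']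
  intro x
  obtain ⟨z, rfl⟩ := hsurj x
  exact z.2

theorem simple_of_invt (V : FDRep ℂ G) (hnt : Nontrivial V)
    (h : ∀ p : Submodule ℂ V, IsInvt V p → p = ⊥ ∨ p = ⊤) : Simple V := by
  constructor
  intro Y f hmono
  constructor
  · intro hiso h0
    obtain ⟨x, hx⟩ := exists_ne (0 : V)
    have hid : 𝟙 V = 0 := (IsIso.inv_hom_id f).symm.trans (by simp [h0])
    have := LinearMap.ext_iff.1 (congrArg (fun φ => φ.hom.hom.hom) hid) x
    simp only [Action.zero_hom, Action.id_hom] at this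
    exact hx (by simpa using this)
  · intro hne
    -- the range of `f.hom` is invariant
    have hrange : IsInvt V (LinearMap.range f.hom.hom.hom) := by
      rintro g x ⟨y, rfl⟩
      exact ⟨Y.ρ g y, (hom_comm_apply' f g y)⟩
    have hfne : f.hom.hom.hom ≠ 0 := by
      intro h0
      exact hne (Action.Hom.ext (FGModuleCat.hom_ext (h0.trans rfl)))
    have hrtop : LinearMap.range f.hom.hom.hom = ⊤ := by
      rcases h _ hrange with hb | ht
      · exact absurd (LinearMap.range_eq_bot.mp hb) hfne
      · exact ht
    have hsurj : Function.Surjective f.hom.hom.hom := LinearMap.range_eq_top.mp hrtop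
    -- kernel is trivial by `Mono`
    have hker : LinearMap.ker f.hom.hom.hom = ⊥ := by
      by_contra hkb
      have hkinvt : IsInvt Y (LinearMap.ker f.hom.hom.hom) := by
        intro g x hx
        rw [LinearMap.mem_ker] at hx ⊢
        refine (hom_comm_apply' f g x).trans ?_
        refine (congrArg (V.ρ g) hx).trans (map_zero _)
      have h1 : subRepι Y _ hkinvt ≫ f = 0 ≫ f := by
        rw [Limits.zero_comp]
        apply Action.Hom.ext
        apply FGModuleCat.hom_ext
        apply LinearMap.ext
        rintro ⟨x, hx⟩
        simp only [Action.comp_hom, Action.zero_hom]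
        exact hx
      have := (cancel_mono f).mp h1
      obtain ⟨x, hx, hx0⟩ := (Submodule.ne_bot_iff _).mp hkb
      have h2 := LinearMap.ext_iff.1 (congrArg (fun φ => φ.hom.hom.hom) this) ⟨x, hx⟩
      simp only [Action.zero_hom] at h2
      exact hx0 h2
    have hinj : Function.Injective f.hom.hom.hom := LinearMap.ker_eq_bot.mp hker
    -- build the inverse morphism
    let e : Y ≃ₗ[ℂ] V := LinearEquiv.ofBijective f.hom.hom.hom ⟨hinj, hsurj⟩
    have hee : ∀ y : Y, e y = f.hom y := fun _ => rfl
    refine ⟨⟨⟨ConcreteCategory.ofHom e.symm.toLinearMap, ?_⟩, ?_, ?_⟩⟩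
    · intro g
      apply FGModuleCat.hom_ext
      apply LinearMap.ext
      intro x
      show e.symm (V.ρ g x) = Y.ρ g (e.symm x)
      apply hinj
      have h6 := hom_comm_apply' f g (e.symm x)
      calc f.hom (e.symm (V.ρ g x)) = e (e.symm (V.ρ g x)) := (hee _).symm
        _ = V.ρ g x := e.apply_symm_apply _
        _ = V.ρ g (e (e.symm x)) := by rw [e.apply_symm_apply]
        _ = V.ρ g (f.hom (e.symm x)) := by rw [hee]
        _ = f.hom (Y.ρ g (e.symm x)) := h6.symm
    · apply Action.Hom.ext
      apply FGModuleCat.hom_ext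
      apply LinearMap.ext
      intro y
      show e.symm (f.hom y) = y
      rw [← hee, e.symm_apply_apply]
    · apply Action.Hom.ext
      apply FGModuleCat.hom_ext
      apply LinearMap.ext
      intro v
      show f.hom (e.symm v) = v
      rw [← hee, e.apply_symm_apply]

def quotRepρ (V : FDRep ℂ G) (p : Submodule ℂ V) (hp : IsInvt V p) :
    Representation ℂ G (V ⧸ p) where
  toFun g := Submodule.mapQ p p (V.ρ g) (fun x hx => hp g x hx)
  map_one' := by
    apply Submodule.linearMap_qext
    apply LinearMap.ext
    intro x
    simp [Submodule.mapQ_apply]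
  map_mul' g h := by
    apply Submodule.linearMap_qext
    apply LinearMap.ext
    intro x
    simp [Submodule.mapQ_apply]

def quotRep (V : FDRep ℂ G) (p : Submodule ℂ V) (hp : IsInvt V p) : FDRep ℂ G :=
  FDRep.of (quotRepρ V p hp)

theorem pullback_simple {H : Type} [Group H] (π : G →* H) (hπ : Function.Surjective π)
    (W : FDRep ℂ H) [hW : Simple W] : Simple (FDRep.of (W.ρ.comp π)) := by
  apply simple_of_invt
  · exact nontrivial_of_simple W
  · intro p hp
    refine invt_eq_bot_or_top W p ?_
    intro hgrp x hx
    obtain ⟨g, rfl⟩ := hπ hgrp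
    exact hp g x hx

set_option maxHeartbeats 1000000 in
theorem ρ_eq_one_of_forall_simple {H : Type} [Group H] [Fintype H] (h : H)
    (hs : ∀ W : FDRep ℂ H, Simple W → W.ρ h = 1) : ∀ U : FDRep ℂ H, U.ρ h = 1 := by
  suffices key : ∀ d : ℕ, ∀ U : FDRep ℂ H, Module.finrank ℂ U ≤ d → U.ρ h = 1 by
    intro U; exact key _ U le_rfl
  intro d
  induction d with
  | zero =>
      intro U hle
      have h0 : Module.finrank ℂ U = 0 := Nat.le_zero.mp hle
      have : Subsingleton U := Module.finrank_zero_iff.mp h0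
      apply LinearMap.ext; intro x; exact this.elim _ _
  | succ d ih =>
      intro U hle
      by_cases h0 : Module.finrank ℂ U = 0
      · have : Subsingleton U := Module.finrank_zero_iff.mp h0
        apply LinearMap.ext; intro x; exact this.elim _ _
      have hnt : Nontrivial U := Module.nontrivial_of_finrank_pos (Nat.pos_of_ne_zero h0)
      -- find a minimal nonzero invariant submodule
      have hex : ∃ k : ℕ, ∃ p : Submodule ℂ U, IsInvt U p ∧ p ≠ ⊥ ∧ Module.finrank ℂ p = k :=
        ⟨Module.finrank ℂ (⊤ : Submodule ℂ U), ⊤, fun g x _ => trivial, by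
          intro hh
          obtain ⟨x, hx⟩ := exists_ne (0 : U)
          have hmem : x ∈ (⊤ : Submodule ℂ U) := trivial
          rw [hh] at hmem
          exact hx (by simpa using hmem), rfl⟩
      classical
      obtain ⟨p, hpinvt, hpne, hpk⟩ := Nat.find_spec hex
      have hmin : ∀ q : Submodule ℂ U, IsInvt U q → q ≠ ⊥ →
          Nat.find hex ≤ Module.finrank ℂ q := by
        intro q hq hqne
        by_contra hlt
        exact Nat.find_min hex (lt_of_not_ge hlt) ⟨q, hq, hqne, rfl⟩
      -- the subrepresentation on `p` is simple
      have hPnt : Nontrivial p := by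
        obtain ⟨x, hx, hx0⟩ := (Submodule.ne_bot_iff p).mp hpne
        exact nontrivial_of_ne ⟨x, hx⟩ 0 (by simp [Subtype.ext_iff, hx0])
      have hsimple : Simple (subRep U p hpinvt) := by
        apply simple_of_invt _ hPnt
        intro q hq
        set q' : Submodule ℂ U := q.map p.subtype with hq'def
        have hq'invt : IsInvt U q' := by
          intro g x hx
          obtain ⟨y, hy, hxy⟩ := Submodule.mem_map.mp hx
          refine ⟨subRepρ U p hpinvt g y, hq g y hy, ?_⟩
          rw [← hxy]
          exact subRepρ_apply U p hpinvt g y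
        by_cases hq'bot : q' = ⊥
        · left
          rw [eq_bot_iff]
          intro y hy
          have hyu : p.subtype y ∈ q' := ⟨y, hy, rfl⟩
          rw [hq'bot] at hyu
          have hy0 : p.subtype y = 0 := by simpa using hyu
          have : y = (0 : p) := Subtype.ext (by simpa using hy0)
          exact (Submodule.mem_bot ℂ).mpr this
        · right
          have h1 : Nat.find hex ≤ Module.finrank ℂ q' := hmin q' hq'invt hq'bot
          have h2 : Module.finrank ℂ q' = Module.finrank ℂ q :=
            (Submodule.finrank_map_subtype_eq p q)
          have h3 : Module.finrank ℂ q ≤ Module.finrank ℂ p := Submodule.finrank_le q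
          have h4 : Module.finrank ℂ q = Module.finrank ℂ p := by omega
          exact Submodule.eq_top_of_finrank_eq h4
      -- `ρ h` acts trivially on `p`
      have hfix : ∀ x : U, x ∈ p → U.ρ h x = x := by
        intro x hx
        have hone := hs (subRep U p hpinvt) hsimple
        have h5 := LinearMap.ext_iff.1 hone ⟨x, hx⟩
        have h7 : ((subRepρ U p hpinvt h ⟨x, hx⟩ : p) : U) = x := congrArg Subtype.val h5
        exact (subRepρ_apply U p hpinvt h ⟨x, hx⟩).symm.trans h7
      -- quotient has smaller dimension
      have hppos : 0 < Module.finrank ℂ p := Module.finrank_pos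
      have hqfin : Module.finrank ℂ (U ⧸ p) ≤ d := by
        have h8 := Submodule.finrank_quotient_add_finrank p
        omega
      have hquot := ih (quotRep U p hpinvt) hqfin
      have hsub : ∀ x : U, U.ρ h x - x ∈ p := by
        intro x
        have h5 := LinearMap.ext_iff.1 hquot (Submodule.Quotient.mk x)
        have h6 : (Submodule.Quotient.mk (U.ρ h x) : U ⧸ p) = Submodule.Quotient.mk x := by
          refine Eq.trans ?_ h5
          exact (Submodule.mapQ_apply (p := p) (q := p) (U.ρ h) (h := fun y hy => hpinvt h y hy) x).symm
        exact (Submodule.Quotient.eq p).mp h6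
      -- `ρ h` is unipotent of finite order, hence trivial
      have hstep : ∀ j : ℕ, ∀ x : U, ((U.ρ h) ^ j) x = x + (j : ℂ) • (U.ρ h x - x) := by
        intro j
        induction j with
        | zero => intro x; simp
        | succ j ihj =>
            intro x
            have : (U.ρ h) ^ (j + 1) = U.ρ h * (U.ρ h) ^ j := (pow_succ' _ _)
            rw [this, Module.End.mul_apply, ihj x, map_add, map_smul]
            rw [hfix _ (hsub x)]
            push_cast
            ring_nf
            module
      have hpow : (U.ρ h) ^ (Fintype.card H) = 1 := by
        rw [← map_pow, pow_card_eq_one, map_one]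
      apply LinearMap.ext
      intro x
      have h9 := hstep (Fintype.card H) x
      rw [hpow] at h9
      have h10 : ((Fintype.card H : ℂ)) • (U.ρ h x - x) = 0 := by
        have := h9.symm
        simpa using this
      have hm0 : (Fintype.card H : ℂ) ≠ 0 := by
        exact_mod_cast Nat.cast_ne_zero.mpr (Fintype.card_ne_zero)
      have := smul_eq_zero.mp h10
      rcases this with hc | hxx
      · exact absurd hc hm0
      · have : U.ρ h x = x := by
          have := sub_eq_zero.mp hxx
          exact this
        simpa using this

theorem eq_one_of_forall_simple {H : Type} [Group H] [Fintype H] (h : H)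
    (hs : ∀ W : FDRep ℂ H, Simple W → W.ρ h = 1) : h = 1 := by
  have hfd : FiniteDimensional ℂ (H →₀ ℂ) :=
    Module.Finite.equiv (Finsupp.linearEquivFunOnFinite ℂ ℂ H).symm
  have hreg := ρ_eq_one_of_forall_simple h hs (FDRep.of (Representation.ofMulAction ℂ H H))
  have h5 := LinearMap.ext_iff.1 hreg (MonoidAlgebra.single (1 : H) (1 : ℂ))
  have h6 : (Representation.ofMulAction ℂ H H h) (MonoidAlgebra.single 1 1) =
      MonoidAlgebra.single (h * 1) (1 : ℂ) := Representation.ofMulAction_single h 1 1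
  have h7 : MonoidAlgebra.single (h * 1) (1 : ℂ) = MonoidAlgebra.single 1 1 := h6.symm.trans h5
  rw [mul_one] at h7
  exact MonoidAlgebra.single_left_injective (one_ne_zero (α := ℂ)) h7


lemma ρ_pow_card [Fintype G] (V : FDRep ℂ G) (g : G) : (V.ρ g) ^ (Fintype.card G) = 1 := by
  rw [← map_pow, pow_card_eq_one, map_one]

lemma scalar_of_mem_charCenter [Fintype G] (V : FDRep ℂ G) {g : G}
    (hg : g ∈ charCenter V) : ∃ c : ℂ, V.ρ g = c • LinearMap.id := by
  have h1 : ((‖V.character g‖ : ℝ) : ℂ) = V.character 1 := hg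
  rw [FDRep.char_one] at h1
  have h2 : ‖V.character g‖ = (Module.finrank ℂ V : ℝ) := by
    exact_mod_cast h1
  exact exists_smul_eq_of_abs_trace (V.ρ g) (Fintype.card G) Fintype.card_ne_zero
    (ρ_pow_card V g) h2

lemma mem_charCenter_of_scalar [Fintype G] (V : FDRep ℂ G) [Simple V] {g : G} {c : ℂ}
    (hc : V.ρ g = c • LinearMap.id) : g ∈ charCenter V := by
  have hnt : Nontrivial V := nontrivial_of_simple V
  have hpow := ρ_pow_card V g
  rw [hc] at hpow
  have hcm : c ^ (Fintype.card G) = 1 := by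
    obtain ⟨v, hv⟩ := exists_ne (0 : V)
    have h3 := LinearMap.ext_iff.1 hpow v
    rw [smul_pow] at h3
    simp only [LinearMap.smul_apply, Module.End.one_apply] at h3
    have h4 : (c ^ Fintype.card G - 1) • v = 0 := by
      rw [sub_smul, one_smul]
      rw [sub_eq_zero]
      simpa using h3
    rcases smul_eq_zero.mp h4 with h5 | h5
    · exact sub_eq_zero.mp h5
    · exact absurd h5 hv
  have habs : ‖c‖ = 1 := abs_eq_one_of_pow_eq_one Fintype.card_ne_zero hcm
  show ((‖V.character g‖ : ℝ) : ℂ) = V.character 1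
  rw [FDRep.char_one]
  have hch : V.character g = c * (Module.finrank ℂ V : ℂ) := by
    show LinearMap.trace ℂ V (V.ρ g) = _
    rw [hc, map_smul, smul_eq_mul]
    congr 1
    exact LinearMap.trace_id ℂ V
  rw [hch]
  rw [norm_mul, habs, one_mul]
  simp

/-- Schur: an endomorphism commuting with the action of a simple rep is scalar. -/
lemma exists_scalar_of_commute (V : FDRep ℂ G) [Simple V] (A : V →ₗ[ℂ] V)
    (hA : ∀ g : G, V.ρ g * A = A * V.ρ g) : ∃ c : ℂ, A = c • LinearMap.id := by
  let f : V ⟶ V := ⟨ConcreteCategory.ofHom A, fun g => by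
    apply FGModuleCat.hom_ext
    apply LinearMap.ext
    intro x
    exact (LinearMap.ext_iff.1 (hA g) x).symm⟩
  have hrank : Module.finrank ℂ (V ⟶ V) = 1 := by
    rw [FDRep.finrank_hom_simple_simple V V, if_pos ⟨Iso.refl V⟩]
  have hid : (𝟙 V : V ⟶ V) ≠ 0 := id_nonzero V
  obtain ⟨c, hc⟩ := (finrank_eq_one_iff_of_nonzero' (𝟙 V) hid).mp hrank f
  refine ⟨c, ?_⟩
  have := congrArg (fun φ => φ.hom.hom.hom) hc
  have h2 : A = c • (𝟙 V : V ⟶ V).hom.hom.hom := this.symm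
  rw [h2]
  rfl

/-- The kernel of a representation as a subgroup. -/
def repKer (V : FDRep ℂ G) : Subgroup G where
  carrier := {g | V.ρ g = 1}
  one_mem' := map_one _
  mul_mem' := by
    intro a b ha hb
    show V.ρ (a * b) = 1
    rw [map_mul, ha, hb, one_mul]
  inv_mem' := by
    intro a ha
    show V.ρ a⁻¹ = 1
    calc V.ρ a⁻¹ = V.ρ a⁻¹ * V.ρ a := by rw [ha, mul_one]
      _ = V.ρ (a⁻¹ * a) := (map_mul _ _ _).symm
      _ = 1 := by rw [inv_mul_cancel, map_one]

lemma comm_mem_repKer (V : FDRep ℂ G) {z : G} (g : G)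
    (hz : ∃ c : ℂ, V.ρ z = c • LinearMap.id) : V.ρ ⁅z, g⁆ = 1 := by
  obtain ⟨c, hc⟩ := hz
  have hcomm : ∀ B : (V →ₗ[ℂ] V), V.ρ z * B = B * V.ρ z := by
    intro B
    rw [hc]
    ext x
    simp [Module.End.mul_apply]
  have hgroup : z * g = ⁅z, g⁆ * (g * z) := by
    rw [commutatorElement_def]
    group
  have h1 : V.ρ z * V.ρ g = V.ρ ⁅z, g⁆ * (V.ρ g * V.ρ z) := by
    rw [← map_mul, ← map_mul, ← map_mul, ← hgroup]
  have h3 : V.ρ ⁅z, g⁆ * V.ρ (g * z) = V.ρ (g * z) := by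
    rw [map_mul, ← h1, hcomm (V.ρ g)]
  calc V.ρ ⁅z, g⁆ = V.ρ ⁅z, g⁆ * (V.ρ (g * z) * V.ρ ((g * z)⁻¹)) := by
        rw [← map_mul, mul_inv_cancel, map_one, mul_one]
    _ = (V.ρ ⁅z, g⁆ * V.ρ (g * z)) * V.ρ ((g * z)⁻¹) := by rw [mul_assoc]
    _ = V.ρ (g * z) * V.ρ ((g * z)⁻¹) := by rw [h3]
    _ = 1 := by rw [← map_mul, mul_inv_cancel, map_one]

end AuxProofs

/-- if `G` is nested with chain of centers `X 0 > ⋯ > X n` and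
`⁅X (i-1), G⁆ ≰ X i` for some `1 ≤ i ≤ n`, then `⁅X (i-1), G⁆ = ⁅⁅X (i-1), G⁆, G⁆`. -/
theorem commutator_perfect_of_not_le (G : Type) [Group G] [Fintype G]
    (n : ℕ) (X : ℕ → Subgroup G) (hX : IsChainOfCenters n X) :
    ∀ i < n, ¬ ⁅X i, (⊤ : Subgroup G)⁆ ≤ X (i + 1) →
      ⁅X i, (⊤ : Subgroup G)⁆ =
        ⁅(⁅X i, (⊤ : Subgroup G)⁆ : Subgroup G), (⊤ : Subgroup G)⁆ := by
  intro i hi hnle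
  obtain ⟨hX0, hXnormal, hXlt, hXex, hXall⟩ := hX
  have hanti : ∀ a b : ℕ, a ≤ b → b ≤ n → X b ≤ X a := by
    intro a b hab
    induction b, hab using Nat.le_induction with
    | base => intro _; exact le_rfl
    | succ b hb ih =>
        intro hbn
        exact le_trans (le_of_lt (hXlt b (by omega))) (ih (by omega))
  haveI hNi : (X i).Normal := hXnormal i (le_of_lt hi)
  haveI hNnormal : (⁅X i, (⊤ : Subgroup G)⁆ : Subgroup G).Normal :=
    Subgroup.commutator_normal (X i) ⊤
  set N : Subgroup G := ⁅X i, (⊤ : Subgroup G)⁆ with hNdef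
  haveI hMnormal : (⁅N, (⊤ : Subgroup G)⁆ : Subgroup G).Normal :=
    Subgroup.commutator_normal N ⊤
  set M : Subgroup G := ⁅N, (⊤ : Subgroup G)⁆ with hMdef
  have hMN : M ≤ N := Subgroup.commutator_le_left N ⊤
  refine le_antisymm ?_ hMN
  intro g hgN
  show g ∈ M
  rw [← QuotientGroup.eq_one_iff g]
  haveI : Fintype (G ⧸ M) := Fintype.ofFinite _
  apply eq_one_of_forall_simple
  intro W hW
  haveI := hW
  set π : G →* G ⧸ M := QuotientGroup.mk' M with hπdef
  have hπsurj : Function.Surjective π := QuotientGroup.mk'_surjective M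
  set V : FDRep ℂ G := FDRep.of (W.ρ.comp π) with hVdef
  haveI hVsimple : Simple V := pullback_simple π hπsurj W
  -- every element of `N` acts as a scalar in `V`
  have hNscalar : ∀ z ∈ N, ∃ c : ℂ, V.ρ z = c • LinearMap.id := by
    intro z hz
    apply exists_scalar_of_commute V (V.ρ z)
    intro g'
    have hcm : ⁅z, g'⁆ ∈ M := Subgroup.commutator_mem_commutator hz (Subgroup.mem_top g')
    have hker : V.ρ ⁅z, g'⁆ = 1 := by
      show W.ρ (π ⁅z, g'⁆) = 1
      have : π ⁅z, g'⁆ = 1 := (QuotientGroup.eq_one_iff _).mpr hcm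
      rw [this, map_one]
    -- commutation from `ρ ⁅z, g'⁆ = 1`
    have hgroup : z * g' = ⁅z, g'⁆ * (g' * z) := by
      rw [commutatorElement_def]; group
    have h1 : V.ρ z * V.ρ g' = V.ρ ⁅z, g'⁆ * (V.ρ g' * V.ρ z) := by
      rw [← map_mul, ← map_mul, ← map_mul, ← hgroup]
    rw [hker, one_mul] at h1
    exact h1.symm
  -- `charCenter V` is one of the `X j`, and `N ≤ X j`
  obtain ⟨j, hjn, hXj⟩ := hXall V hVsimple
  have hNsub : ∀ z ∈ N, z ∈ X j := by
    intro z hz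
    obtain ⟨c, hc⟩ := hNscalar z hz
    have : z ∈ charCenter V := mem_charCenter_of_scalar V hc
    rw [hXj] at this
    exact this
  have hji : j ≤ i := by
    by_contra hgt
    push_neg at hgt
    have hle2 : X j ≤ X (i + 1) := hanti (i + 1) j hgt hjn
    exact hnle (fun z hz => hle2 (hNsub z hz))
  have hXi_le : X i ≤ X j := hanti j i hji (le_of_lt hi)
  -- hence `X i ⊆ charCenter V`, so `N = ⁅X i, ⊤⁆ ≤ ker V`
  have hNker : N ≤ repKer V := by
    rw [hNdef, Subgroup.commutator_le]
    intro z hz g' _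
    have hzc : z ∈ charCenter V := by
      rw [hXj]
      exact hXi_le hz
    obtain ⟨c, hc⟩ := scalar_of_mem_charCenter V hzc
    show V.ρ ⁅z, g'⁆ = 1
    exact comm_mem_repKer V g' ⟨c, hc⟩
  exact hNker hgN
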